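/- Let C be the binary code defined as the null space over F_2 of the vertex-edge incidence matrix of a finite graph G. If G has girth at least t+1, then any set of at most t erased code symbols (edges) can be recovered sequentially: there is an ordering of the erased edges such that each can be recovered using a parity check (vertex) incident to exactly one not-yet-recovered erased edge. -/

import Mathlib

open SimpleGraph

private lemma cycle_absurd {V : Type*} [Fintype V] [DecidableEq V]
    (G : SimpleGraph V) (t : ℕ)
    (hgirth : ((t + 1 : ℕ) : ℕ∞) ≤ G.girth)
    (E : Finset (Sym2 V)) (hcard : E.card ≤ t)
    {a : V} (w : G.Walk a a) (hw : w.IsCycle) (hsub : ∀ e ∈ w.edges, e ∈ E) : False := by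
  have hlen : w.length ≤ t := by
    have h1 : w.edges.toFinset ⊆ E := fun e he => hsub e (List.mem_toFinset.mp he)
    have h2 : w.edges.toFinset.card = w.length := by
      rw [List.toFinset_card_of_nodup hw.edges_nodup, SimpleGraph.Walk.length_edges]
    calc w.length = w.edges.toFinset.card := h2.symm
      _ ≤ E.card := Finset.card_le_card h1
      _ ≤ t := hcard
  have hg1 : G.egirth ≤ (w.length : ℕ∞) := le_egirth.mp le_rfl a w hw
  have hac : ¬ G.IsAcyclic := fun h => h w hw
  have hne : G.egirth ≠ ⊤ := egirth_eq_top.not.mpr hac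
  have hg2 : ((t+1 : ℕ) : ℕ∞) ≤ G.egirth :=
    hgirth.trans_eq (by rw [SimpleGraph.girth, ENat.coe_toNat hne])
  have := le_trans hg2 hg1
  have : t + 1 ≤ w.length := by exact_mod_cast this
  omega

private lemma exists_leaf {V : Type*} [Fintype V] [DecidableEq V]
    (G : SimpleGraph V) [DecidableRel G.Adj] (t : ℕ)
    (hgirth : ((t + 1 : ℕ) : ℕ∞) ≤ G.girth)
    (E : Finset (Sym2 V)) (hE : E ⊆ G.edgeFinset) (hcard : E.card ≤ t)
    (hne : E.Nonempty) :
    ∃ e ∈ E, ∃ v ∈ e, ∀ e' ∈ E, e' ≠ e → v ∉ e' := by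
  classical
  by_contra hno
  push_neg at hno
  -- the graph spanned by the erased edges
  set H : SimpleGraph V := SimpleGraph.fromEdgeSet (E : Set (Sym2 V)) with hH
  have hle : H ≤ G := by
    rw [hH]
    intro u v huv
    rw [SimpleGraph.fromEdgeSet_adj] at huv
    have := hE huv.1
    rw [SimpleGraph.mem_edgeFinset] at this
    exact this
  have hedgeE : ∀ {u v : V}, H.Adj u v → s(u, v) ∈ E := by
    intro u v huv
    rw [hH, SimpleGraph.fromEdgeSet_adj] at huv
    exact huv.1
  have hadj : ∀ {u v : V}, s(u, v) ∈ E → H.Adj u v := by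
    intro u v hmem
    rw [hH, SimpleGraph.fromEdgeSet_adj]
    refine ⟨hmem, ?_⟩
    have := hE hmem
    rw [SimpleGraph.mem_edgeFinset, SimpleGraph.mem_edgeSet] at this
    exact this.ne
  -- any cycle in H yields a contradiction
  have hcyc : ∀ {d : V} (c : H.Walk d d), c.IsCycle → False := by
    intro d c hc
    have hc' : (c.mapLe hle).IsCycle := hc.mapLe hle
    refine cycle_absurd G t hgirth E hcard (c.mapLe hle) hc' ?_
    intro e he
    rw [SimpleGraph.Walk.mapLe, SimpleGraph.Walk.edges_map, List.mem_map] at he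
    obtain ⟨e', he', rfl⟩ := he
    have : e' ∈ H.edgeSet := c.edges_subset_edgeSet he'
    have heq : Sym2.map (SimpleGraph.Hom.ofLE hle) e' = e' := by
      induction e' using Sym2.ind with
      | _ x y => rfl
    rw [heq]
    rw [hH] at this
    simp only [SimpleGraph.edgeSet_fromEdgeSet, Set.mem_diff] at this
    exact this.1
  -- P n : there is a path of length n in H
  set P : ℕ → Prop := fun n => ∃ (a b : V) (p : H.Walk a b), p.IsPath ∧ p.length = n with hP
  haveI : DecidablePred P := Classical.decPred P
  have hP1 : P 1 := by
    obtain ⟨e, he⟩ := hne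
    induction e using Sym2.ind with
    | _ x y =>
      have h := hadj he
      exact ⟨x, y, SimpleGraph.Walk.cons h SimpleGraph.Walk.nil, by simp [h.ne], rfl⟩
  have hbound : ∀ n, P n → n < Fintype.card V := by
    rintro n ⟨a, b, p, hp, rfl⟩
    exact hp.length_lt
  set N := Nat.findGreatest P (Fintype.card V) with hN
  have hNspec : P N :=
    Nat.findGreatest_spec (le_of_lt (hbound 1 hP1)) hP1
  have hNmax : ¬ P (N + 1) := by
    intro h
    exact Nat.findGreatest_is_greatest (Nat.lt_succ_self N)
      (le_of_lt (hbound (N+1) h)) h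
  have hN1 : 1 ≤ N := Nat.le_findGreatest (le_of_lt (hbound 1 hP1)) hP1
  obtain ⟨a, b, p, hp, hplen⟩ := hNspec
  -- work with the reverse walk q : from b to a
  set q := p.reverse with hq
  have hqp : q.IsPath := hp.reverse
  have hqlen : q.length = N := by rw [hq, SimpleGraph.Walk.length_reverse, hplen]
  clear_value N
  clear_value q
  clear hq hplen hp
  cases q with
  | nil => simp at hqlen; omega
  | @cons _ c _ h q'' =>
    -- h : H.Adj b c, q'' : H.Walk c a
    have hq''p : q''.IsPath := hqp.of_cons
    have hbns : b ∉ q''.support := by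
      have := hqp
      rw [SimpleGraph.Walk.cons_isPath_iff] at this
      exact this.2
    -- apply no-leaf to the edge s(b,c) at vertex b
    obtain ⟨e', he'E, he'ne, hbe'⟩ := hno s(b, c) (hedgeE h) b (by simp)
    obtain ⟨d, rfl⟩ := Sym2.mem_iff_exists.mp hbe'
    have hbd : H.Adj b d := hadj he'E
    by_cases hd : d ∈ (SimpleGraph.Walk.cons h q'').support
    · -- d on the path: build a cycle
      have hdb : d ≠ b := hbd.ne.symm
      set r := (SimpleGraph.Walk.cons h q'').takeUntil d hd with hr
      have hrp : r.IsPath := hqp.takeUntil hd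
      have hce : s(d, b) ∉ r.edges := by
        intro hmem
        have hsub : s(d,b) ∈ (SimpleGraph.Walk.cons h q'').edges :=
          SimpleGraph.Walk.edges_takeUntil_subset _ hd hmem
        rw [SimpleGraph.Walk.edges_cons, List.mem_cons] at hsub
        rcases hsub with heq | hmem'
        · rw [Sym2.eq_iff] at heq
          rcases heq with ⟨h1, h2⟩ | ⟨h1, h2⟩
          · exact hdb h1
          · exact he'ne (by rw [h1])
        · exact hbns (SimpleGraph.Walk.snd_mem_support_of_mem_edges q'' hmem')
      have hcycle : (SimpleGraph.Walk.cons hbd.symm r).IsCycle := by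
        rw [SimpleGraph.Walk.cons_isCycle_iff]
        exact ⟨hrp, hce⟩
      exact hcyc _ hcycle
    · -- d not on the path: extend to a longer path
      apply hNmax
      refine ⟨d, a, SimpleGraph.Walk.cons hbd.symm (SimpleGraph.Walk.cons h q''), ?_, ?_⟩
      · rw [SimpleGraph.Walk.cons_isPath_iff]
        exact ⟨hqp, hd⟩
      · simp only [SimpleGraph.Walk.length_cons]
        simp only [SimpleGraph.Walk.length_cons] at hqlen
        omega

/-- Sequential recovery: if `G` has girth at least `t+1`, then any set `E` of at most `t`
edges (erased code symbols of the binary code with the incidence matrix of `G` as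
parity-check matrix) can be ordered as `e_1, ..., e_s` so that each `e_j` has an endpoint
(a parity check) incident to none of the later erased edges `e_{j+1}, ..., e_s`. -/
theorem sequential_recovery_from_girth {V : Type*} [Fintype V] [DecidableEq V]
    (G : SimpleGraph V) [DecidableRel G.Adj] (t : ℕ)
    (hgirth : ((t + 1 : ℕ) : ℕ∞) ≤ G.girth)
    (E : Finset (Sym2 V)) (hE : E ⊆ G.edgeFinset) (hcard : E.card ≤ t) :
    ∃ l : List (Sym2 V), l.Nodup ∧ l.toFinset = E ∧
      ∀ (i : ℕ) (hi : i < l.length),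
        ∃ v : V, v ∈ l.get ⟨i, hi⟩ ∧ ∀ e ∈ l.drop (i + 1), v ∉ e := by
  classical
  have main : ∀ (n : ℕ) (E : Finset (Sym2 V)), E ⊆ G.edgeFinset → E.card ≤ t → E.card = n →
      ∃ l : List (Sym2 V), l.Nodup ∧ l.toFinset = E ∧
      ∀ (i : ℕ) (hi : i < l.length),
        ∃ v : V, v ∈ l.get ⟨i, hi⟩ ∧ ∀ e ∈ l.drop (i + 1), v ∉ e := by
    intro n
    induction n with
    | zero =>
      intro E hE hcard hn
      refine ⟨[], List.nodup_nil, ?_, ?_⟩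
      · rw [Finset.card_eq_zero] at hn
        simp [hn]
      · intro i hi
        simp at hi
    | succ n ih =>
      intro E hE hcard hn
      have hne : E.Nonempty := Finset.card_pos.mp (by omega)
      obtain ⟨e, he, v, hv, hvprop⟩ := exists_leaf G t hgirth E hE hcard hne
      set E' := E.erase e with hE'def
      have hE'sub : E' ⊆ G.edgeFinset := (Finset.erase_subset e E).trans hE
      have hE'card : E'.card = n := by
        rw [hE'def, Finset.card_erase_of_mem he, hn]; omega
      obtain ⟨l', h1, h2, h3⟩ := ih E' hE'sub (by omega) hE'card
      have henl' : e ∉ l' := by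
        intro hmem
        rw [← List.mem_toFinset, h2, hE'def] at hmem
        exact (Finset.notMem_erase e E) hmem
      refine ⟨e :: l', List.nodup_cons.mpr ⟨henl', h1⟩, ?_, ?_⟩
      · rw [List.toFinset_cons, h2, hE'def, Finset.insert_erase he]
      · intro i hi
        match i with
        | 0 =>
          refine ⟨v, by simpa using hv, ?_⟩
          intro e' he'
          simp only [List.drop_succ_cons, List.drop_zero] at he'
          have he'E' : e' ∈ E' := by rw [← h2]; exact List.mem_toFinset.mpr he'
          rw [hE'def, Finset.mem_erase] at he'E'
          exact hvprop e' he'E'.2 he'E'.1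
        | Nat.succ i =>
          have hi' : i < l'.length := by
            simp only [List.length_cons] at hi
            omega
          obtain ⟨w, hw1, hw2⟩ := h3 i hi'
          exact ⟨w, by simpa using hw1, by simpa using hw2⟩
  exact main E.card E hE hcard rfl
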